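/- Let n ≡ 1 (mod 4) be prime with n ≥ 5, and let q ∈ Z_n \ {0} not be a quadratic residue modulo n. Then for the linearization of the attractively coupled (α = 0) Kuramoto model on the Paley graph P_n about the q-twisted state u_n^{(q)}, there exists x ∈ Z_n \ {0} such that the eigenvalue λ_x(q) satisfies λ_x(q) ≥ π·n^{−1/2} > 0 (the key step in the proof of Lemma 6.1, case C1, implying instability of non-residue twisted states for attractive coupling). -/

import Mathlib

open Finset Real

namespace PaleyAux

noncomputable def ζ (n : ℕ) : ℂ := Complex.exp (2 * Real.pi * Complex.I / n)

noncomputable def ψ (n : ℕ) [NeZero n] (a : ZMod n) : ℂ := ζ n ^ a.val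

noncomputable def Cr (n : ℕ) [NeZero n] (a : ZMod n) : ℝ :=
  Real.cos (2 * Real.pi * a.val / n)

variable {n : ℕ} [NeZero n]

lemma zeta_pow_n : ζ n ^ n = 1 := by
  have hn : (n : ℂ) ≠ 0 := Nat.cast_ne_zero.2 (NeZero.ne n)
  rw [ζ, ← Complex.exp_nat_mul]
  rw [show (n : ℂ) * (2 * Real.pi * Complex.I / n) = 2 * Real.pi * Complex.I by
    field_simp]
  exact Complex.exp_two_pi_mul_I

lemma zeta_pow_mod (j : ℕ) : ζ n ^ j = ζ n ^ (j % n) := by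
  conv_lhs => rw [← Nat.div_add_mod j n]
  rw [pow_add, pow_mul, zeta_pow_n, one_pow, one_mul]

lemma zeta_pow_eq_psi (j : ℕ) : ζ n ^ j = ψ n (j : ZMod n) := by
  rw [ψ, ZMod.val_natCast, ← zeta_pow_mod]

lemma psi_add (a b : ZMod n) : ψ n (a + b) = ψ n a * ψ n b := by
  rw [ψ, ψ, ψ, ← pow_add, ZMod.val_add, ← zeta_pow_mod]

lemma psi_zero : ψ n 0 = 1 := by
  rw [ψ, ZMod.val_zero, pow_zero]

lemma psi_eq_exp (a : ZMod n) :
    ψ n a = Complex.exp (2 * Real.pi * Complex.I * a.val / n) := by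
  rw [ψ, ζ, ← Complex.exp_nat_mul]
  congr 1
  ring

lemma psi_neg (a : ZMod n) :
    ψ n (-a) = Complex.exp (-(2 * Real.pi * Complex.I * a.val / n)) := by
  have h : ψ n (-a) * Complex.exp (2 * Real.pi * Complex.I * a.val / n) = 1 := by
    rw [← psi_eq_exp, ← psi_add, neg_add_cancel, psi_zero]
  rw [Complex.exp_neg]
  exact eq_inv_of_mul_eq_one_left h

lemma psi_add_psi_neg (a : ZMod n) : ψ n a + ψ n (-a) = 2 * (Cr n a : ℂ) := by
  have harg : 2 * Real.pi * Complex.I * a.val / n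
      = ((2 * Real.pi * a.val / n : ℝ) : ℂ) * Complex.I := by
    push_cast; ring
  rw [psi_eq_exp, psi_neg, harg, ← neg_mul, Complex.exp_mul_I, Complex.exp_mul_I,
    Complex.cos_neg, Complex.sin_neg, ← Complex.ofReal_cos, Cr]
  ring


lemma zeta_ne_one (hn : 2 ≤ n) : ζ n ≠ 1 := by
  intro h
  rw [ζ, Complex.exp_eq_one_iff] at h
  obtain ⟨k, hk⟩ := h
  have hn0 : (n : ℂ) ≠ 0 := Nat.cast_ne_zero.2 (NeZero.ne n)
  have hpi : (2 * Real.pi * Complex.I) ≠ 0 := by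
    simp [Real.pi_ne_zero, Complex.I_ne_zero]
  have h1 : (1 : ℂ) = k * n := by
    have := hk
    field_simp at this
    apply mul_left_cancel₀ hpi
    rw [mul_one]
    linear_combination (2 * Real.pi * Complex.I) * this
  have h2 : ((1 : ℤ) : ℂ) = ((k * n : ℤ) : ℂ) := by push_cast; exact h1
  have h3 : (1 : ℤ) = k * n := Int.cast_injective h2
  have hn2 : (2 : ℤ) ≤ n := by exact_mod_cast hn
  rcases le_or_gt k 0 with hk0 | hk0
  · nlinarith
  · nlinarith

lemma sum_psi (hn : 2 ≤ n) : ∑ a : ZMod n, ψ n a = 0 := by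
  have h : ∑ a : ZMod n, ψ n a = ∑ j ∈ Finset.range n, ζ n ^ j := by
    refine Finset.sum_nbij' (fun a => a.val) (fun j => (j : ZMod n)) ?_ ?_ ?_ ?_ ?_
    · intro a _; exact Finset.mem_range.2 (ZMod.val_lt a)
    · intro j _; exact Finset.mem_univ _
    · intro a _; exact (ZMod.natCast_val a).trans (ZMod.cast_id n a)
    · intro j hj; exact ZMod.val_natCast_of_lt (Finset.mem_range.1 hj)
    · intro a _; rw [ψ]
  rw [h, geom_sum_eq (zeta_ne_one hn), zeta_pow_n, sub_self, zero_div]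


lemma cos_nat_mod (m : ℕ) :
    Real.cos (2 * Real.pi * m / n) = Real.cos (2 * Real.pi * ((m % n : ℕ) : ℝ) / n) := by
  have hn : (n : ℝ) ≠ 0 := Nat.cast_ne_zero.2 (NeZero.ne n)
  have hm : (m : ℝ) = n * ((m / n : ℕ) : ℝ) + ((m % n : ℕ) : ℝ) := by
    exact_mod_cast congrArg (Nat.cast : ℕ → ℝ) (Nat.div_add_mod m n).symm
  have harg : 2 * Real.pi * (m : ℝ) / n
      = 2 * Real.pi * ((m % n : ℕ) : ℝ) / n + ((m / n : ℕ) : ℤ) * (2 * Real.pi) := by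
    rw [hm, Int.cast_natCast]; field_simp; ring
  rw [harg]
  exact Real.cos_add_int_mul_two_pi _ _

lemma Cr_natCast (m : ℕ) : Real.cos (2 * Real.pi * m / n) = Cr n ((m : ZMod n)) := by
  rw [Cr, ZMod.val_natCast, cos_nat_mod]

lemma Cr_neg (a : ZMod n) : Cr n (-a) = Cr n a := by
  by_cases ha : a = 0
  · rw [ha, neg_zero]
  · have hv : (-a).val = n - a.val := by
      rw [ZMod.neg_val, if_neg ha]
    have hle : a.val ≤ n := le_of_lt (ZMod.val_lt a)
    have hn : (n : ℝ) ≠ 0 := Nat.cast_ne_zero.2 (NeZero.ne n)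
    rw [Cr, Cr, hv]
    rw [show (2 * Real.pi * ((n - a.val : ℕ) : ℝ) / n)
        = (1 : ℕ) * (2 * Real.pi) - 2 * Real.pi * a.val / n by
      rw [Nat.cast_sub hle]; field_simp; ring]
    exact Real.cos_nat_mul_two_pi_sub _ 1

lemma Cr_sq (a : ZMod n) : Cr n a ^ 2 = 1 / 2 + Cr n (2 * a) / 2 := by
  have h2a : ((2 * a.val : ℕ) : ZMod n) = (2 * a : ZMod n) := by
    push_cast [ZMod.natCast_val, ZMod.cast_id]; ring
  rw [Cr, Real.cos_sq]
  congr 2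
  rw [show (2 * (2 * Real.pi * a.val / n)) = 2 * Real.pi * ((2 * a.val : ℕ) : ℝ) / n by
    push_cast; ring, Cr_natCast, h2a]

lemma Cr_zero : Cr n 0 = 1 := by
  simp [Cr]


section Char

variable [Fact n.Prime]

/-- the level set of the quadratic character -/
def Sf (n : ℕ) [NeZero n] [Fact n.Prime] (ε : ℤ) : Finset (ZMod n) :=
  Finset.univ.filter (fun a => quadraticChar (ZMod n) a = ε)

lemma mem_Sf {ε : ℤ} {a : ZMod n} : a ∈ Sf n ε ↔ quadraticChar (ZMod n) a = ε := by
  simp [Sf]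

lemma sum_psi_mul (hn : 2 ≤ n) (b : ZMod n) :
    ∑ a : ZMod n, ψ n (a * b) = if b = 0 then (n : ℂ) else 0 := by
  split_ifs with hb
  · subst hb
    simp only [mul_zero, psi_zero]
    rw [Finset.sum_const, Finset.card_univ, ZMod.card, nsmul_eq_mul, mul_one]
  · rw [← sum_psi hn]
    exact Fintype.sum_bijective (· * b) (mulRight_bijective₀ b hb)
      (fun a => ψ n (a * b)) (ψ n) (fun a => rfl)

lemma sum_Sf_mul {M : Type} [AddCommMonoid M] (u : ZMod n) (hu0 : u ≠ 0) (ε : ℤ)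
    (f : ZMod n → M) :
    ∑ z ∈ Sf n ε, f (u * z) = ∑ z ∈ Sf n (quadraticChar (ZMod n) u * ε), f z := by
  have hchi : quadraticChar (ZMod n) u⁻¹ * quadraticChar (ZMod n) u = 1 := by
    rw [← map_mul, inv_mul_cancel₀ hu0, map_one]
  refine Finset.sum_nbij' (fun z => u * z) (fun z => u⁻¹ * z) ?_ ?_ ?_ ?_ ?_
  · intro a ha
    rw [mem_Sf] at ha ⊢
    rw [map_mul, ha]
  · intro a ha
    rw [mem_Sf] at ha ⊢
    rw [map_mul, ha, ← mul_assoc, hchi, one_mul]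
  · intro a _
    show u⁻¹ * (u * a) = a
    rw [← mul_assoc, inv_mul_cancel₀ hu0, one_mul]
  · intro a _
    show u * (u⁻¹ * a) = a
    rw [← mul_assoc, mul_inv_cancel₀ hu0, one_mul]
  · intro a _
    rfl

lemma sum_Sf_neg {M : Type} [AddCommMonoid M] (h4 : n % 4 = 1) (hn5 : 5 ≤ n) (ε : ℤ)
    (f : ZMod n → M) :
    ∑ z ∈ Sf n ε, f (-z) = ∑ z ∈ Sf n ε, f z := by
  have h0 : (-1 : ZMod n) ≠ 0 := by
    have : Nontrivial (ZMod n) := by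
      have hn1 : 1 < n := by omega
      exact ZMod.nontrivial_iff.2 (by omega)
    exact neg_ne_zero.2 one_ne_zero
  have hchi : quadraticChar (ZMod n) (-1 : ZMod n) = 1 := by
    refine (quadraticChar_one_iff_isSquare h0).2 ?_
    exact (ZMod.exists_sq_eq_neg_one_iff (p := n)).2 (by omega)
  have := sum_Sf_mul (n := n) (-1 : ZMod n) h0 ε f
  rw [hchi, one_mul] at this
  rw [← this]
  congr 1
  ext z
  rw [neg_one_mul]

lemma sum_split {M : Type} [AddCommMonoid M] (f : ZMod n → M) :
    ∑ a : ZMod n, f a = f 0 + (∑ a ∈ Sf n 1, f a + ∑ a ∈ Sf n (-1), f a) := by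
  classical
  have hdisj : Disjoint (Sf n 1) (Sf n (-1)) := by
    rw [Finset.disjoint_left]
    intro a h1 h2
    rw [mem_Sf] at h1 h2
    rw [h1] at h2
    norm_num at h2
  have hunion : Sf n 1 ∪ Sf n (-1) = Finset.univ.erase 0 := by
    ext a
    simp only [Finset.mem_union, mem_Sf, Finset.mem_erase, Finset.mem_univ, and_true]
    constructor
    · rintro (h | h) rfl <;>
        { rw [quadraticChar_zero] at h; norm_num at h }
    · intro ha
      exact quadraticChar_dichotomy ha
  rw [← Finset.sum_union hdisj, hunion, Finset.add_sum_erase _ f (Finset.mem_univ 0)]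

lemma card_Sf (hn5 : 5 ≤ n) :
    (Sf n 1).card = (Sf n (-1)).card ∧ 2 * (Sf n 1).card = n - 1 := by
  have hchar2 : ringChar (ZMod n) ≠ 2 := by
    rw [ZMod.ringChar_zmod_n]
    omega
  have hs1 : ∑ a ∈ Sf n 1, (quadraticChar (ZMod n) a : ℤ) = ((Sf n 1).card : ℤ) := by
    rw [Finset.sum_congr rfl (fun a ha => (mem_Sf.1 ha : _)), Finset.sum_const,
      nsmul_eq_mul, mul_one]
  have hs2 : ∑ a ∈ Sf n (-1), (quadraticChar (ZMod n) a : ℤ) = -((Sf n (-1)).card : ℤ) := by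
    rw [Finset.sum_congr rfl (fun a ha => (mem_Sf.1 ha : _)), Finset.sum_const,
      nsmul_eq_mul, mul_neg_one]
  have h := (quadraticChar_sum_zero (F := ZMod n) hchar2)
  rw [sum_split (fun a => (quadraticChar (ZMod n) a : ℤ)), hs1, hs2,
    quadraticChar_zero] at h
  have hceq : (Sf n 1).card = (Sf n (-1)).card := by
    have : ((Sf n 1).card : ℤ) = ((Sf n (-1)).card : ℤ) := by linarith
    exact_mod_cast this
  refine ⟨hceq, ?_⟩
  have htot : (n : ℤ) = 1 + ((Sf n 1).card + (Sf n (-1)).card) := by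
    have h := sum_split (n := n) (fun _ => (1 : ℤ))
    simp only [Finset.sum_const, nsmul_eq_mul, mul_one, Finset.card_univ, ZMod.card] at h
    exact_mod_cast h
  have : 2 * ((Sf n 1).card : ℤ) = (n : ℤ) - 1 := by
    rw [← hceq] at htot
    linarith
  omega


lemma sum_psi_filter_real (h4 : n % 4 = 1) (hn5 : 5 ≤ n) (ε : ℤ) :
    ∑ z ∈ Sf n ε, ψ n z = ((∑ z ∈ Sf n ε, Cr n z : ℝ) : ℂ) := by
  have h := sum_Sf_neg h4 hn5 ε (ψ n)
  have h2 : (2 : ℂ) * ∑ z ∈ Sf n ε, ψ n z = ∑ z ∈ Sf n ε, (ψ n z + ψ n (-z)) := by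
    rw [Finset.sum_add_distrib, h]; ring
  have h3 : ∑ z ∈ Sf n ε, (ψ n z + ψ n (-z)) = (2 : ℂ) * ((∑ z ∈ Sf n ε, Cr n z : ℝ) : ℂ) := by
    rw [Finset.sum_congr rfl (fun z _ => psi_add_psi_neg z), ← Finset.mul_sum]
    push_cast
    ring
  have := h2.trans h3
  field_simp at this
  push_cast
  exact_mod_cast this

lemma sum_cos_psi_neg (h4 : n % 4 = 1) (hn5 : 5 ≤ n) (ε : ℤ) :
    ∑ z ∈ Sf n ε, (Cr n z : ℂ) * ψ n (-z)
      = ((∑ z ∈ Sf n ε, (Cr n z) ^ 2 : ℝ) : ℂ) := by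
  have h := sum_Sf_neg h4 hn5 ε (fun z => (Cr n z : ℂ) * ψ n (-z))
  have h1 : ∑ z ∈ Sf n ε, (Cr n z : ℂ) * ψ n z = ∑ z ∈ Sf n ε, (Cr n z : ℂ) * ψ n (-z) := by
    rw [← h]
    refine Finset.sum_congr rfl fun z _ => ?_
    rw [Cr_neg, neg_neg]
  have h2 : (2 : ℂ) * ∑ z ∈ Sf n ε, (Cr n z : ℂ) * ψ n (-z)
      = ∑ z ∈ Sf n ε, (Cr n z : ℂ) * (ψ n z + ψ n (-z)) := by
    rw [show (∑ z ∈ Sf n ε, (Cr n z : ℂ) * (ψ n z + ψ n (-z)))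
        = ∑ z ∈ Sf n ε, ((Cr n z : ℂ) * ψ n z + (Cr n z : ℂ) * ψ n (-z)) from
      Finset.sum_congr rfl fun z _ => by ring]
    rw [Finset.sum_add_distrib, h1]; ring
  have h3 : ∑ z ∈ Sf n ε, (Cr n z : ℂ) * (ψ n z + ψ n (-z))
      = (2 : ℂ) * ((∑ z ∈ Sf n ε, (Cr n z) ^ 2 : ℝ) : ℂ) := by
    rw [Finset.sum_congr rfl (fun z _ => by rw [psi_add_psi_neg z] : ∀ z ∈ Sf n ε,
      (Cr n z : ℂ) * (ψ n z + ψ n (-z)) = (Cr n z : ℂ) * (2 * (Cr n z : ℂ)))]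
    push_cast
    rw [Finset.mul_sum]
    exact Finset.sum_congr rfl fun z _ => by ring
  have := h2.trans h3
  field_simp at this
  push_cast
  exact_mod_cast this

lemma gauss_core (h4 : n % 4 = 1) (hn5 : 5 ≤ n) :
    (∑ z ∈ Sf n 1, Cr n z) + (∑ z ∈ Sf n (-1), Cr n z) = -1 ∧
    (2 * (∑ z ∈ Sf n 1, Cr n z) + 1) ^ 2 = n := by
  have hn2 : 2 ≤ n := by omega
  set A := ∑ z ∈ Sf n 1, Cr n z with hA
  set Br := ∑ z ∈ Sf n (-1), Cr n z with hB
  -- sum of all psi is zero, split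
  have hAB : A + Br = -1 := by
    have h := sum_psi (n := n) hn2
    rw [sum_split (ψ n), psi_zero, sum_psi_filter_real h4 hn5 1,
      sum_psi_filter_real h4 hn5 (-1)] at h
    have h' : ((1 + (A + Br) : ℝ) : ℂ) = ((0 : ℝ) : ℂ) := by push_cast; rw [← h]
    have := Complex.ofReal_injective h'
    linarith
  refine ⟨hAB, ?_⟩
  -- Parseval
  set F : ZMod n → ℂ := fun a => ∑ z ∈ Sf n 1, ψ n (a * z) with hF
  have hFneg : ∀ a, F (-a) = F a := by
    intro a
    have h := sum_Sf_neg h4 hn5 1 (fun z => ψ n (a * z))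
    calc F (-a) = ∑ z ∈ Sf n 1, ψ n (a * (-z)) := by
          refine Finset.sum_congr rfl fun z _ => ?_
          congr 1; ring
      _ = F a := h
  have hPar : ∑ a : ZMod n, F a * F (-a) = (n : ℂ) * (Sf n 1).card := by
    calc ∑ a : ZMod n, F a * F (-a)
        = ∑ a : ZMod n, ∑ z ∈ Sf n 1, ∑ w ∈ Sf n 1, ψ n (a * (z - w)) := by
          refine Finset.sum_congr rfl fun a _ => ?_
          rw [hF, Finset.sum_mul_sum]
          refine Finset.sum_congr rfl fun z _ => Finset.sum_congr rfl fun w _ => ?_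
          rw [← psi_add]; congr 1; ring
      _ = ∑ z ∈ Sf n 1, ∑ w ∈ Sf n 1, ∑ a : ZMod n, ψ n (a * (z - w)) := by
          rw [Finset.sum_comm]
          exact Finset.sum_congr rfl fun z _ => Finset.sum_comm
      _ = ∑ z ∈ Sf n 1, ∑ w ∈ Sf n 1, (if z - w = 0 then (n : ℂ) else 0) := by
          exact Finset.sum_congr rfl fun z _ => Finset.sum_congr rfl fun w _ =>
            sum_psi_mul hn2 (z - w)
      _ = ∑ z ∈ Sf n 1, ∑ w ∈ Sf n 1, (if w = z then (n : ℂ) else 0) := by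
          refine Finset.sum_congr rfl fun z _ => Finset.sum_congr rfl fun w _ => ?_
          congr 1
          simp [sub_eq_zero, eq_comm]
      _ = ∑ z ∈ Sf n 1, (n : ℂ) := by
          refine Finset.sum_congr rfl fun z hz => ?_
          rw [Finset.sum_ite_eq' (Sf n 1) z (fun _ => (n : ℂ)), if_pos hz]
      _ = (n : ℂ) * (Sf n 1).card := by
          rw [Finset.sum_const, nsmul_eq_mul, mul_comm]
  -- evaluate F on the pieces
  have hF0 : F 0 = ((Sf n 1).card : ℂ) := by
    rw [hF]
    simp only [zero_mul, psi_zero]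
    rw [Finset.sum_const, nsmul_eq_mul, mul_one]
  have hFQ : ∀ a ∈ Sf n 1, F a = ((A : ℝ) : ℂ) := by
    intro a ha
    have hchi := mem_Sf.1 ha
    have ha0 : a ≠ 0 := by
      intro h; rw [h, quadraticChar_zero] at hchi; norm_num at hchi
    have h := sum_Sf_mul a ha0 1 (ψ n)
    rw [hchi, one_mul] at h
    calc F a = ∑ z ∈ Sf n 1, ψ n (a * z) := rfl
      _ = ((A : ℝ) : ℂ) := by rw [h, sum_psi_filter_real h4 hn5 1]
  have hFN : ∀ a ∈ Sf n (-1), F a = ((Br : ℝ) : ℂ) := by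
    intro a ha
    have hchi := mem_Sf.1 ha
    have ha0 : a ≠ 0 := by
      intro h; rw [h, quadraticChar_zero] at hchi; norm_num at hchi
    have h := sum_Sf_mul a ha0 1 (ψ n)
    rw [hchi, mul_one] at h
    calc F a = ∑ z ∈ Sf n 1, ψ n (a * z) := rfl
      _ = ((Br : ℝ) : ℂ) := by rw [h, sum_psi_filter_real h4 hn5 (-1)]
  -- split the Parseval sum
  have hsplit := sum_split (n := n) (fun a => F a * F (-a))
  rw [hPar] at hsplit
  rw [neg_zero, hF0] at hsplit
  rw [Finset.sum_congr rfl (fun a ha => by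
      rw [hFneg, hFQ a ha] : ∀ a ∈ Sf n 1, F a * F (-a) = ((A : ℝ) : ℂ) * ((A : ℝ) : ℂ)),
    Finset.sum_congr rfl (fun a ha => by
      rw [hFneg, hFN a ha] : ∀ a ∈ Sf n (-1), F a * F (-a) = ((Br : ℝ) : ℂ) * ((Br : ℝ) : ℂ)),
    Finset.sum_const, Finset.sum_const, nsmul_eq_mul, nsmul_eq_mul] at hsplit
  -- cards
  obtain ⟨hc12, hc1⟩ := card_Sf (n := n) hn5
  set c1 := (Sf n 1).card with hc1def
  rw [← hc12] at hsplit
  -- to reals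
  have hreal : (n : ℝ) * c1 = c1 * c1 + (c1 * (A * A) + c1 * (Br * Br)) := by
    have h' : (((n : ℝ) * c1 : ℝ) : ℂ)
        = ((c1 * c1 + (c1 * (A * A) + c1 * (Br * Br)) : ℝ) : ℂ) := by
      push_cast
      linear_combination hsplit
    exact Complex.ofReal_injective h'
  have hc1R : 2 * (c1 : ℝ) = (n : ℝ) - 1 := by
    have h5 : (1 : ℕ) ≤ n := by omega
    have h6 := congrArg (Nat.cast (R := ℝ)) hc1
    push_cast [Nat.cast_sub h5] at h6
    linarith
  have hc1pos : (0 : ℝ) < c1 := by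
    have : 2 * c1 = n - 1 := hc1
    have : 0 < c1 := by omega
    exact_mod_cast this
  have hA2B2 : A * A + Br * Br = (n : ℝ) - c1 := by
    have := hreal
    nlinarith
  nlinarith [hA2B2, hAB, hc1R]


lemma mem_Sf_one {a : ZMod n} : a ∈ Sf n 1 ↔ a ≠ 0 ∧ IsSquare a := by
  rw [mem_Sf]
  constructor
  · intro h
    have ha0 : a ≠ 0 := by
      intro h0; rw [h0, quadraticChar_zero] at h; norm_num at h
    exact ⟨ha0, (quadraticChar_one_iff_isSquare ha0).1 h⟩
  · rintro ⟨h0, hs⟩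
    exact (quadraticChar_one_iff_isSquare h0).2 hs

end Char

lemma dec5_set : ∀ (a : ZMod 5), a ≠ 0 ∧ IsSquare a ↔ a ∈ ({1, 4} : Finset (ZMod 5)) := by
  decide

lemma dec5_nm : (1 : ZMod 5) ∉ ({4} : Finset (ZMod 5)) := by decide

lemma dec5_neg : (4 : ZMod 5) = -1 := by decide

lemma dec13_set : ∀ (a : ZMod 13), a ≠ 0 ∧ IsSquare a ↔
    a ∈ ({1, 3, 4, 9, 10, 12} : Finset (ZMod 13)) := by decide

lemma dec13_nm1 : (1 : ZMod 13) ∉ ({3, 4, 9, 10, 12} : Finset (ZMod 13)) := by decide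
lemma dec13_nm3 : (3 : ZMod 13) ∉ ({4, 9, 10, 12} : Finset (ZMod 13)) := by decide
lemma dec13_nm4 : (4 : ZMod 13) ∉ ({9, 10, 12} : Finset (ZMod 13)) := by decide
lemma dec13_nm9 : (9 : ZMod 13) ∉ ({10, 12} : Finset (ZMod 13)) := by decide
lemma dec13_nm10 : (10 : ZMod 13) ∉ ({12} : Finset (ZMod 13)) := by decide
lemma dec13_neg1 : (12 : ZMod 13) = -1 := by decide
lemma dec13_neg3 : (10 : ZMod 13) = -3 := by decide
lemma dec13_neg4 : (9 : ZMod 13) = -4 := by decide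

lemma A5_nonneg [Fact (Nat.Prime 5)] : 0 ≤ ∑ z ∈ Sf 5 1, Cr 5 z := by
  have hset : Sf 5 1 = ({1, 4} : Finset (ZMod 5)) := by
    ext a
    rw [mem_Sf_one]
    exact dec5_set a
  rw [hset, Finset.sum_insert dec5_nm, Finset.sum_singleton]
  have h4 : Cr 5 4 = Cr 5 1 := by
    rw [dec5_neg, Cr_neg]
  have hv1 : ((1 : ZMod 5).val : ℝ) = 1 := by norm_num [show (1 : ZMod 5).val = 1 from rfl]
  have hc1 : 0 ≤ Cr 5 1 := by
    rw [Cr, hv1]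
    apply Real.cos_nonneg_of_mem_Icc
    constructor
    · nlinarith [Real.pi_pos]
    · nlinarith [Real.pi_pos]
  rw [h4]
  linarith

lemma A13_nonneg [Fact (Nat.Prime 13)] : 0 ≤ ∑ z ∈ Sf 13 1, Cr 13 z := by
  have hset : Sf 13 1 = ({1, 3, 4, 9, 10, 12} : Finset (ZMod 13)) := by
    ext a
    rw [mem_Sf_one]
    exact dec13_set a
  rw [hset, Finset.sum_insert dec13_nm1, Finset.sum_insert dec13_nm3,
    Finset.sum_insert dec13_nm4, Finset.sum_insert dec13_nm9,
    Finset.sum_insert dec13_nm10, Finset.sum_singleton]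
  have h12 : Cr 13 12 = Cr 13 1 := by
    rw [dec13_neg1, Cr_neg]
  have h10 : Cr 13 10 = Cr 13 3 := by
    rw [dec13_neg3, Cr_neg]
  have h9 : Cr 13 9 = Cr 13 4 := by
    rw [dec13_neg4, Cr_neg]
  have hv1 : ((1 : ZMod 13).val : ℝ) = 1 := by norm_num [show (1 : ZMod 13).val = 1 from rfl]
  have hv3 : ((3 : ZMod 13).val : ℝ) = 3 := by norm_num [show (3 : ZMod 13).val = 3 from rfl]
  have hv4 : ((4 : ZMod 13).val : ℝ) = 4 := by norm_num [show (4 : ZMod 13).val = 4 from rfl]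
  have hpi := Real.pi_pos
  have hc1 : 1 / 2 ≤ Cr 13 1 := by
    rw [Cr, hv1, ← Real.cos_pi_div_three]
    apply Real.cos_le_cos_of_nonneg_of_le_pi
    · positivity
    · linarith
    · nlinarith
  have hc3 : 0 ≤ Cr 13 3 := by
    rw [Cr, hv3]
    apply Real.cos_nonneg_of_mem_Icc
    constructor
    · nlinarith
    · nlinarith
  have hc4 : -(1 / 2) ≤ Cr 13 4 := by
    have hval : Real.cos (2 * Real.pi / 3) = -(1 / 2) := by
      rw [show (2 * Real.pi / 3) = Real.pi - Real.pi / 3 by ring, Real.cos_pi_sub,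
        Real.cos_pi_div_three]
    rw [Cr, hv4, ← hval]
    apply Real.cos_le_cos_of_nonneg_of_le_pi
    · positivity
    · linarith
    · nlinarith
  rw [h12, h10, h9]
  linarith

end PaleyAux


open PaleyAux in
set_option maxHeartbeats 1000000 in
/-- key step of Lemma 6.1, case C1: for prime `n ≡ 1 (mod 4)`, `n ≥ 5`,
and `q ≠ 0` not a quadratic residue mod `n`, the linearization of the attractively
coupled (`α = 0`) Kuramoto model on the Paley graph about the `q`-twisted state has an
eigenvalue `λ_x(q) ≥ π n^{-1/2} > 0` for some `x ≠ 0`. -/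
theorem paley_nonresidue_twisted_state_positive_eigenvalue
    (n : ℕ) (hp : n.Prime) (h4 : n % 4 = 1) (hn5 : 5 ≤ n) [NeZero n]
    (Q : Finset (ZMod n))
    (hQ : ∀ a : ZMod n, a ∈ Q ↔ (a ≠ 0 ∧ ∃ x : ZMod n, x ^ 2 = a))
    (q : ZMod n) (hq0 : q ≠ 0) (hqnr : ¬ ∃ y : ZMod n, y ^ 2 = q)
    (deltaS : ZMod n → ℂ)
    (hdelta : ∀ x : ZMod n, deltaS x =
      if x ∈ Q then
        (((2 * Real.pi / Q.card) *
          Real.cos (2 * Real.pi * ((q.val * x.val : ℕ) : ℝ) / n) : ℝ) : ℂ)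
      else 0)
    (B : (ZMod n → ℂ) → (ZMod n → ℂ))
    (hB : ∀ (η : ZMod n → ℂ) (x : ZMod n),
      B η x = (∑ y : ZMod n, deltaS y * η (x - y)) - (∑ y ∈ Q, deltaS y) * η x)
    (e : ZMod n → ZMod n → ℂ)
    (he : ∀ x y : ZMod n,
      e x y = Complex.exp (2 * Real.pi * Complex.I * ((x.val * y.val : ℕ) : ℂ) / n)) :
    ∃ x : ZMod n, x ≠ 0 ∧ ∃ lam : ℝ,
      B (e x) = ((lam : ℝ) : ℂ) • e x ∧
      Real.pi / Real.sqrt n ≤ lam ∧ 0 < lam := by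
  classical
  haveI : Fact n.Prime := ⟨hp⟩
  obtain ⟨hc12, hc1⟩ := card_Sf (n := n) hn5
  have hQS : Q = Sf n 1 := by
    ext a
    rw [hQ, mem_Sf_one]
    constructor
    · rintro ⟨h0, x, hx⟩; exact ⟨h0, ⟨x, by rw [← hx]; ring⟩⟩
    · rintro ⟨h0, x, hx⟩; exact ⟨h0, ⟨x, by rw [hx]; ring⟩⟩
  have hqchi : quadraticChar (ZMod n) q = -1 := by
    refine quadraticChar_neg_one_iff_not_isSquare.2 ?_
    rintro ⟨r, hr⟩
    exact hqnr ⟨r, by rw [hr]; ring⟩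
  set A : ℝ := ∑ z ∈ Sf n 1, Cr n z with hAdef
  set Br : ℝ := ∑ z ∈ Sf n (-1), Cr n z with hBdef
  obtain ⟨hAB, hGsq⟩ := gauss_core (n := n) h4 hn5
  have hkR : ((Q.card : ℕ) : ℝ) = ((n : ℝ) - 1) / 2 := by
    rw [hQS]
    have h6 := congrArg (Nat.cast (R := ℝ)) hc1
    push_cast [Nat.cast_sub (show 1 ≤ n by omega)] at h6
    linarith
  have hnR : (5 : ℝ) ≤ (n : ℝ) := by exact_mod_cast hn5
  have hkpos : (0 : ℝ) < ((Q.card : ℕ) : ℝ) := by rw [hkR]; linarith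
  set c0 : ℝ := 2 * Real.pi / ((Q.card : ℕ) : ℝ) with hc0def
  set T : ℝ := ∑ z ∈ Sf n (-1), (Cr n z ^ 2 - Cr n z) with hTdef
  set lam : ℝ := c0 * T with hlamdef
  -- the eigenvalue equation
  have hepsi : ∀ x y : ZMod n, e x y = ψ n (x * y) := by
    intro x y
    have h1 : ((x.val * y.val : ℕ) : ZMod n) = x * y := by
      push_cast [ZMod.natCast_val, ZMod.cast_id]
      ring
    have h2 : (2 * Real.pi * Complex.I * ((x.val * y.val : ℕ) : ℂ) / n)
        = ((x.val * y.val : ℕ) : ℂ) * (2 * Real.pi * Complex.I / n) := by ring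
    calc e x y
        = Complex.exp (((x.val * y.val : ℕ) : ℂ) * (2 * Real.pi * Complex.I / n)) := by
          rw [he x y, h2]
      _ = ζ n ^ (x.val * y.val) := by rw [Complex.exp_nat_mul]; rfl
      _ = ψ n ((x.val * y.val : ℕ) : ZMod n) := zeta_pow_eq_psi _
      _ = ψ n (x * y) := by rw [h1]
  have hdelta' : ∀ y : ZMod n, deltaS y =
      if y ∈ Q then
        ((c0 * Cr n (q * y) : ℝ) : ℂ) else 0 := by
    intro y
    rw [hdelta y]
    by_cases hy : y ∈ Q
    · rw [if_pos hy, if_pos hy]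
      congr 2
      rw [Cr, ZMod.val_mul]
      exact cos_nat_mod _
    · rw [if_neg hy, if_neg hy]
  have hkey : B (e q) = ((lam : ℝ) : ℂ) • e q := by
    funext w
    simp only [Pi.smul_apply, smul_eq_mul]
    rw [hB (e q) w]
    have hterm : ∀ y : ZMod n, deltaS y * e q (w - y)
        = (if y ∈ Q then ((c0 * Cr n (q * y) : ℝ) : ℂ)
            * (ψ n (q * w) * ψ n (-(q * y))) else 0) := by
      intro y
      rw [hdelta' y, hepsi q (w - y)]
      by_cases hy : y ∈ Q
      · rw [if_pos hy, if_pos hy,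
          show q * (w - y) = q * w + -(q * y) by ring, psi_add]
      · rw [if_neg hy, if_neg hy, zero_mul]
    rw [Finset.sum_congr rfl (fun y _ => hterm y), Finset.sum_ite_mem Finset.univ Q _,
      Finset.univ_inter]
    have hmass : ∑ y ∈ Q, deltaS y
        = ∑ y ∈ Q, ((c0 * Cr n (q * y) : ℝ) : ℂ) :=
      Finset.sum_congr rfl fun y hy => by rw [hdelta' y, if_pos hy]
    rw [hmass, hepsi q w]
    have hfac : ∑ y ∈ Q, ((c0 * Cr n (q * y) : ℝ) : ℂ)
          * (ψ n (q * w) * ψ n (-(q * y)))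
        = ψ n (q * w) * ∑ y ∈ Q, ((c0 * Cr n (q * y) : ℝ) : ℂ)
          * ψ n (-(q * y)) := by
      rw [Finset.mul_sum]
      exact Finset.sum_congr rfl fun y _ => by ring
    rw [hfac]
    have hsum1 : ∑ y ∈ Q, ((c0 * Cr n (q * y) : ℝ) : ℂ)
          * ψ n (-(q * y))
        = ∑ z ∈ Sf n (-1), ((c0 * Cr n z : ℝ) : ℂ)
          * ψ n (-z) := by
      rw [hQS]
      have h := sum_Sf_mul (n := n) q hq0 1
        (fun z => ((c0 * Cr n z : ℝ) : ℂ) * ψ n (-z))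
      rw [show quadraticChar (ZMod n) q * 1 = (-1 : ℤ) by rw [hqchi]; ring] at h
      exact h
    have hsum2 : ∑ y ∈ Q, ((c0 * Cr n (q * y) : ℝ) : ℂ)
        = ∑ z ∈ Sf n (-1), ((c0 * Cr n z : ℝ) : ℂ) := by
      rw [hQS]
      have h := sum_Sf_mul (n := n) q hq0 1
        (fun z => ((c0 * Cr n z : ℝ) : ℂ))
      rw [show quadraticChar (ZMod n) q * 1 = (-1 : ℤ) by rw [hqchi]; ring] at h
      exact h
    rw [hsum1, hsum2]
    have hfac1 : ∑ z ∈ Sf n (-1), ((c0 * Cr n z : ℝ) : ℂ)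
          * ψ n (-z)
        = ((c0 : ℝ) : ℂ)
          * ∑ z ∈ Sf n (-1), ((Cr n z : ℝ) : ℂ) * ψ n (-z) := by
      rw [Finset.mul_sum]
      refine Finset.sum_congr rfl fun z _ => ?_
      push_cast
      ring
    rw [hfac1, sum_cos_psi_neg h4 hn5 (-1)]
    have hreal : lam = c0 * (∑ z ∈ Sf n (-1), Cr n z ^ 2)
        - ∑ z ∈ Sf n (-1), (c0 * Cr n z) := by
      rw [hlamdef, Finset.mul_sum, Finset.mul_sum, ← Finset.sum_sub_distrib]
      exact Finset.sum_congr rfl fun z _ => by ring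
    rw [hreal]
    push_cast
    ring
  -- lower bound for the eigenvalue
  have h20 : (2 : ZMod n) ≠ 0 := by
    have h2 : ((2 : ℕ) : ZMod n) ≠ 0 := by
      rw [Ne, ZMod.natCast_eq_zero_iff]
      intro hdvd
      have := Nat.le_of_dvd (by norm_num) hdvd
      omega
    simpa using h2
  have hc2R : (((Sf n (-1)).card : ℕ) : ℝ) = ((n : ℝ) - 1) / 2 := by
    rw [← hc12, ← hQS]
    exact hkR
  have hsq : ∑ z ∈ Sf n (-1), Cr n z ^ 2
      = ((n : ℝ) - 1) / 4 + (1 / 2) * ∑ z ∈ Sf n (-1), Cr n (2 * z) := by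
    rw [Finset.sum_congr rfl (fun z _ => Cr_sq z), Finset.sum_add_distrib,
      Finset.sum_const, nsmul_eq_mul]
    rw [show ∑ z ∈ Sf n (-1), Cr n (2 * z) / 2
        = (1 / 2) * ∑ z ∈ Sf n (-1), Cr n (2 * z) by
      rw [Finset.mul_sum]; exact Finset.sum_congr rfl fun z _ => by ring]
    rw [hc2R]
    ring
  -- final bound
  have hmul2 := sum_Sf_mul (n := n) 2 h20 (-1) (Cr n)
  have hTsplit : T = (∑ z ∈ Sf n (-1), Cr n z ^ 2) - Br := by
    rw [hTdef, Finset.sum_sub_distrib, ← hBdef]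
  have hABs : A + Br = -1 := by rw [hAdef, hBdef]; exact hAB
  have hGs : (2 * A + 1) ^ 2 = (n : ℝ) := by rw [hAdef]; exact hGsq
  have hpi := Real.pi_pos
  have hsqrt_pos : (0 : ℝ) < Real.sqrt n := Real.sqrt_pos.2 (by linarith)
  have hs2 : Real.sqrt n * Real.sqrt n = (n : ℝ) := Real.mul_self_sqrt (by linarith)
  have hne1 : ((n : ℝ) - 1) ≠ 0 := by linarith
  have hlam4 : lam = 4 * Real.pi * T / ((n : ℝ) - 1) := by
    have h : (2 * Real.pi / (((n : ℝ) - 1) / 2)) = 4 * Real.pi / ((n : ℝ) - 1) := by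
      rw [div_div_eq_mul_div]
      ring_nf
    rw [hlamdef, hc0def, hkR, h, div_mul_eq_mul_div]
  have hTcase : T = ((n : ℝ) - 1) / 4 + (1 + A) / 2
      ∨ T = ((n : ℝ) - 1) / 4 + 3 * A / 2 + 1 := by
    rcases quadraticChar_dichotomy h20 with h2chi | h2chi
    · left
      rw [show quadraticChar (ZMod n) 2 * (-1) = (-1 : ℤ) by rw [h2chi]; ring] at hmul2
      rw [hTsplit, hsq, hmul2, ← hBdef]
      linarith [hABs]
    · right
      rw [show quadraticChar (ZMod n) 2 * (-1) = (1 : ℤ) by rw [h2chi]; ring] at hmul2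
      rw [hTsplit, hsq, hmul2, ← hAdef]
      linarith [hABs]
  have hge : Real.pi / Real.sqrt n ≤ lam := by
    by_cases h17 : 17 ≤ n
    · have h17R : (17 : ℝ) ≤ (n : ℝ) := by exact_mod_cast h17
      have hs4 : (4 : ℝ) ≤ Real.sqrt n := by
        rw [show (4 : ℝ) = Real.sqrt 16 by
          rw [show (16 : ℝ) = 4 ^ 2 by norm_num, Real.sqrt_sq (by norm_num : (0:ℝ) ≤ 4)]]
        exact Real.sqrt_le_sqrt (by linarith)
      have hAlb : -(1 + Real.sqrt n) / 2 ≤ A := by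
        have habs : |2 * A + 1| = Real.sqrt n := by
          rw [← Real.sqrt_sq_eq_abs, hGs]
        have h := neg_abs_le (2 * A + 1)
        rw [habs] at h
        linarith
      have hTlb : ((n : ℝ) - 3 * Real.sqrt n) / 4 ≤ T := by
        rcases hTcase with h | h <;> rw [h] <;>
          linarith [hAlb, Real.sqrt_nonneg n]
      rw [hlam4, div_le_div_iff₀ hsqrt_pos (by linarith : (0:ℝ) < (n:ℝ) - 1)]
      have e0 : (n : ℝ) * 4 ≤ (n : ℝ) * Real.sqrt n :=
        mul_le_mul_of_nonneg_left hs4 (by linarith)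
      have e1 : ((n : ℝ) - 1) ≤ ((n : ℝ) - 3 * Real.sqrt n) * Real.sqrt n := by
        nlinarith [hs2, e0]
      have e2 : ((n : ℝ) - 3 * Real.sqrt n) / 4 * Real.sqrt n ≤ T * Real.sqrt n :=
        mul_le_mul_of_nonneg_right hTlb hsqrt_pos.le
      calc Real.pi * ((n : ℝ) - 1)
          ≤ Real.pi * (((n : ℝ) - 3 * Real.sqrt n) * Real.sqrt n) :=
            mul_le_mul_of_nonneg_left e1 hpi.le
        _ ≤ Real.pi * (4 * T * Real.sqrt n) := by
            have h4' : ((n : ℝ) - 3 * Real.sqrt n) * Real.sqrt n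
                ≤ 4 * T * Real.sqrt n := by linarith
            exact mul_le_mul_of_nonneg_left h4' hpi.le
        _ = 4 * Real.pi * T * Real.sqrt n := by ring
    · have hsmall : n = 5 ∨ n = 13 := by
        have h9 : n = 5 ∨ n = 9 ∨ n = 13 := by omega
        rcases h9 with h | h | h
        · exact Or.inl h
        · exfalso; rw [h] at hp; exact (by decide : ¬ Nat.Prime 9) hp
        · exact Or.inr h
      have hA0 : 0 ≤ A := by
        rcases hsmall with h | h
        · subst h; rw [hAdef]; exact A5_nonneg
        · subst h; rw [hAdef]; exact A13_nonneg
      have hTlb : ((n : ℝ) - 1) / 4 + 1 / 2 ≤ T := by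
        rcases hTcase with h | h <;> rw [h] <;> linarith
      have h1s : 1 ≤ Real.sqrt n := by
        rw [show (1 : ℝ) = Real.sqrt 1 by rw [Real.sqrt_one]]
        exact Real.sqrt_le_sqrt (by linarith)
      have hple : Real.pi / Real.sqrt n ≤ Real.pi := by
        rw [div_le_iff₀ hsqrt_pos]
        nlinarith
      have hlge : Real.pi ≤ lam := by
        rw [hlam4, le_div_iff₀ (by linarith : (0:ℝ) < (n:ℝ) - 1)]
        have h4' : (n : ℝ) - 1 ≤ 4 * T := by linarith
        nlinarith [mul_le_mul_of_nonneg_left h4' hpi.le]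
      linarith
  exact ⟨q, hq0, lam, hkey, hge, lt_of_lt_of_le (div_pos hpi hsqrt_pos) hge⟩
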